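/- Let (Δ_K) be nonnegative reals satisfying Δ_{k+1} ≤ (1 - μ/k)Δ_k + (1/k)·b for all k ≥ 1, where μ ∈ (0,1) and b ≥ 0. Then limsup_{K→∞} Δ_K ≤ (e^μ/μ)·b. -/

import Mathlib

open Filter Finset Real

theorem stmt_11 (Δ : ℕ → ℝ) (μ b : ℝ) (hμ : 0 < μ) (hμ1 : μ < 1) (hb : 0 ≤ b)
    (hΔ : ∀ k, 0 ≤ Δ k)
    (hrec : ∀ k : ℕ, 1 ≤ k → Δ (k + 1) ≤ (1 - μ / (k : ℝ)) * Δ k + (1 / (k : ℝ)) * b) :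
    Filter.limsup Δ Filter.atTop ≤ Real.exp 1 ^ μ / μ * b := by
  set t : ℝ := b / μ with ht
  set g : ℕ → ℝ := fun k => max (Δ k - t) 0 with hg
  have hfac : ∀ k : ℕ, 1 ≤ k → (0:ℝ) ≤ 1 - μ / (k : ℝ) := by
    intro k hk
    have hk1 : (1:ℝ) ≤ (k:ℝ) := by exact_mod_cast hk
    have : μ / (k:ℝ) ≤ μ := by
      rw [div_le_iff₀ (by linarith)]
      nlinarith
    linarith
  have hgnn : ∀ k, 0 ≤ g k := fun k => le_max_right _ _
  have key : ∀ k : ℕ, 1 ≤ k → g (k + 1) ≤ (1 - μ / (k : ℝ)) * g k := by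
    intro k hk
    have h0 := hfac k hk
    have hkpos : (0:ℝ) < (k:ℝ) := by positivity -- wrong if k=0, but 1 ≤ k
    have h1 : Δ (k+1) - t ≤ (1 - μ / (k:ℝ)) * (Δ k - t) := by
      have := hrec k hk
      have ht' : (μ / (k:ℝ)) * t = (1 / (k:ℝ)) * b := by
        field_simp [ht]; rw [ht]; field_simp
      nlinarith [this, ht']
    have h2 : Δ (k+1) - t ≤ (1 - μ / (k:ℝ)) * g k := by
      calc Δ (k+1) - t ≤ (1 - μ / (k:ℝ)) * (Δ k - t) := h1
        _ ≤ (1 - μ / (k:ℝ)) * g k := by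
            apply mul_le_mul_of_nonneg_left (le_max_left _ _) h0
    exact max_le h2 (by positivity)
  have prodbound : ∀ k : ℕ, g (k + 1) ≤ g 1 * ∏ i ∈ Finset.Icc 1 k, (1 - μ / (i:ℝ)) := by
    intro k
    induction k with
    | zero => simp
    | succ n ih =>
      have hn1 : 1 ≤ n + 1 := Nat.le_add_left 1 n
      have h0 := hfac (n+1) hn1
      calc g (n + 1 + 1) ≤ (1 - μ / ((n+1:ℕ):ℝ)) * g (n+1) := key (n+1) hn1
        _ ≤ (1 - μ / ((n+1:ℕ):ℝ)) * (g 1 * ∏ i ∈ Finset.Icc 1 n, (1 - μ / (i:ℝ))) :=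
            mul_le_mul_of_nonneg_left ih h0
        _ = g 1 * ∏ i ∈ Finset.Icc 1 (n+1), (1 - μ / (i:ℝ)) := by
            rw [Finset.prod_Icc_succ_top hn1]; ring
  have prodexp : ∀ k : ℕ, (∏ i ∈ Finset.Icc 1 k, (1 - μ / (i:ℝ))) ≤
      Real.exp (-μ * ∑ i ∈ Finset.Icc 1 k, (1 / (i:ℝ))) := by
    intro k
    have h1 : (∏ i ∈ Finset.Icc 1 k, (1 - μ / (i:ℝ))) ≤
        ∏ i ∈ Finset.Icc 1 k, Real.exp (-(μ / (i:ℝ))) := by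
      apply Finset.prod_le_prod
      · intro i hi
        exact hfac i (Finset.mem_Icc.mp hi).1
      · intro i hi
        have := Real.add_one_le_exp (-(μ / (i:ℝ)))
        linarith
    calc (∏ i ∈ Finset.Icc 1 k, (1 - μ / (i:ℝ)))
        ≤ ∏ i ∈ Finset.Icc 1 k, Real.exp (-(μ / (i:ℝ))) := h1
      _ = Real.exp (∑ i ∈ Finset.Icc 1 k, -(μ / (i:ℝ))) := (Real.exp_sum _ _).symm
      _ = Real.exp (-μ * ∑ i ∈ Finset.Icc 1 k, (1 / (i:ℝ))) := by
          congr 1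
          rw [Finset.mul_sum]
          apply Finset.sum_congr rfl
          intro i _
          ring
  -- harmonic sum tends to infinity
  have hH : Tendsto (fun k : ℕ => ∑ i ∈ Finset.Icc 1 k, (1 / (i:ℝ))) atTop atTop := by
    have h := Real.tendsto_sum_range_one_div_nat_succ_atTop
    have heq : ∀ k : ℕ, (∑ i ∈ Finset.Icc 1 k, (1 / (i:ℝ))) =
        ∑ i ∈ Finset.range k, (1 / ((i:ℝ) + 1)) := by
      intro k
      rw [← Finset.Ico_add_one_right_eq_Icc, Finset.sum_Ico_eq_sum_range]
      simp [add_comm]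
    exact h.congr fun k => (heq k).symm
  have hexp0 : Tendsto (fun k : ℕ => Real.exp (-μ * ∑ i ∈ Finset.Icc 1 k, (1 / (i:ℝ))))
      atTop (nhds 0) := by
    apply Real.tendsto_exp_atBot.comp
    apply Tendsto.neg_mul_atTop (neg_neg_iff_pos.mpr hμ) tendsto_const_nhds hH |>.congr
    · intro x; rfl
  -- squeeze: g (k+1) → 0
  have hgto : Tendsto (fun k : ℕ => g (k + 1)) atTop (nhds 0) := by
    have hub : ∀ k, g (k+1) ≤ g 1 * Real.exp (-μ * ∑ i ∈ Finset.Icc 1 k, (1 / (i:ℝ))) := by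
      intro k
      calc g (k+1) ≤ g 1 * ∏ i ∈ Finset.Icc 1 k, (1 - μ / (i:ℝ)) := prodbound k
        _ ≤ g 1 * Real.exp (-μ * ∑ i ∈ Finset.Icc 1 k, (1 / (i:ℝ))) :=
            mul_le_mul_of_nonneg_left (prodexp k) (hgnn 1)
    have hlim : Tendsto (fun k : ℕ => g 1 * Real.exp (-μ * ∑ i ∈ Finset.Icc 1 k, (1 / (i:ℝ))))
        atTop (nhds 0) := by
      simpa using hexp0.const_mul (g 1)
    exact squeeze_zero (fun k => hgnn (k+1)) hub hlim
  have hbdd : Filter.IsBoundedUnder (· ≥ ·) atTop Δ :=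
    Filter.isBoundedUnder_of ⟨0, fun k => hΔ k⟩
  have hcobdd : IsCoboundedUnder (· ≤ ·) atTop Δ := hbdd.isCoboundedUnder_le
  have hlimsup : limsup Δ atTop ≤ t := by
    apply le_of_forall_pos_le_add
    intro ε hε
    apply Filter.limsup_le_of_le hcobdd
    have := hgto.eventually (eventually_le_nhds hε)
    have h2 : ∀ᶠ k : ℕ in atTop, g k ≤ ε := by
      obtain ⟨N, hN⟩ := eventually_atTop.mp this
      refine eventually_atTop.mpr ⟨N + 1, fun k hk => ?_⟩
      obtain ⟨m, rfl⟩ : ∃ m, k = m + 1 := ⟨k - 1, by omega⟩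
      exact hN m (by omega)
    filter_upwards [h2] with k hk
    have := le_max_left (Δ k - t) 0
    have : Δ k - t ≤ g k := this
    linarith
  have hfinal : t ≤ Real.exp 1 ^ μ / μ * b := by
    rw [Real.exp_one_rpow]
    have h1 : (1:ℝ) ≤ Real.exp μ := by
      rw [show (1:ℝ) = Real.exp 0 by simp]
      exact Real.exp_le_exp.mpr hμ.le
    rw [ht, div_mul_eq_mul_div, div_le_div_iff₀ hμ hμ]
    nlinarith [mul_nonneg (sub_nonneg.mpr h1) (mul_nonneg hb hμ.le)]
  linarith
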